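/- Let f : ℝ² → ℝ be three times continuously differentiable with ‖D³f(x)‖ ≤ C₃ for all x ∈ ℝ². Fix an angle γ and let u = (cos γ, sin γ) and u⊥ = (−sin γ, cos γ) be the rotations of the standard basis vectors by γ. Then for every point p ∈ ℝ² and every h > 0, the five-point cross sum is invariant under rotation of the sampling stencil up to third order: |(f(p + h u) + f(p − h u) + f(p + h u⊥) + f(p − h u⊥)) − (f(p + h e₁) + f(p − h e₁) + f(p + h e₂) + f(p − h e₂))| ≤ (4/3)·C₃·h³. -/

import Mathlib

open Set

section helpers

variable {E F : Type*} [NormedAddCommGroup E] [NormedSpace ℝ E]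
  [NormedAddCommGroup F] [NormedSpace ℝ F]

private lemma fderiv_comp_const_add'' (φ : E → F) (c x : E) :
    fderiv ℝ (fun y => φ (c + y)) x = fderiv ℝ φ (c + x) := by
  by_cases hd : DifferentiableAt ℝ φ (c + x)
  · have h1 : HasFDerivAt (fun y : E => c + y) (ContinuousLinearMap.id ℝ E) x :=
      (hasFDerivAt_id x).const_add c
    have h2 := hd.hasFDerivAt.comp x h1
    rw [ContinuousLinearMap.comp_id] at h2
    exact h2.fderiv
  · have hd2 : ¬ DifferentiableAt ℝ (fun y => φ (c + y)) x := by
      intro hcon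
      apply hd
      have h1 : DifferentiableAt ℝ (fun z : E => -c + z) (c + x) :=
        (differentiableAt_id).const_add (-c)
      have h2 : DifferentiableAt ℝ ((fun y => φ (c + y)) ∘ (fun z : E => -c + z)) (c + x) :=
        DifferentiableAt.comp (c + x) (by rw [neg_add_cancel_left]; exact hcon) h1
      have h3 : ((fun y => φ (c + y)) ∘ (fun z : E => -c + z)) = φ := by
        funext z; simp [Function.comp, add_neg_cancel_left]
      rwa [h3] at h2
    rw [fderiv_zero_of_not_differentiableAt hd, fderiv_zero_of_not_differentiableAt hd2]

private lemma iteratedFDeriv_comp_const_add' (φ : E → F) (c : E) :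
    ∀ (n : ℕ) (x : E), iteratedFDeriv ℝ n (fun y => φ (c + y)) x = iteratedFDeriv ℝ n φ (c + x)
  | 0, x => by ext m; simp
  | (n+1), x => by
    have IH : iteratedFDeriv ℝ n (fun z => φ (c + z))
        = fun y => iteratedFDeriv ℝ n φ (c + y) :=
      funext fun y => iteratedFDeriv_comp_const_add' φ c n y
    rw [iteratedFDeriv_succ_eq_comp_left, iteratedFDeriv_succ_eq_comp_left]
    simp only [Function.comp_apply]
    congr 1
    rw [IH, fderiv_comp_const_add'']

private lemma itdw_eq {g : ℝ → ℝ} (hg : ContDiff ℝ 3 g) {s : Set ℝ} (hs : UniqueDiffOn ℝ s)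
    {y : ℝ} (hy : y ∈ s) {k : ℕ} (hk : k ≤ 3) :
    iteratedDerivWithin k g s y = iteratedDeriv k g y := by
  have hkk : (k : WithTop ℕ∞) ≤ ((3 : ℕ∞) : WithTop ℕ∞) := by exact_mod_cast hk
  rw [iteratedDerivWithin_eq_iteratedFDerivWithin, iteratedDeriv_eq_iteratedFDeriv]
  congr 1
  exact (((contDiff_iff_ftaylorSeries.mp hg).hasFTaylorSeriesUpToOn
    s).eq_iteratedFDerivWithin_of_uniqueDiffOn hkk hs hy).symm

private lemma one_sided {g : ℝ → ℝ} (hg : ContDiff ℝ 3 g) {K h : ℝ}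
    (hK : ∀ t, |iteratedDeriv 3 g t| ≤ K) (hh : 0 < h) :
    |g h - (g 0 + h * iteratedDeriv 1 g 0 + h ^ 2 / 2 * iteratedDeriv 2 g 0)| ≤ K * h ^ 3 / 6 := by
  have hs : UniqueDiffOn ℝ (Icc (0:ℝ) h) := uniqueDiffOn_Icc hh
  have hmem0 : (0:ℝ) ∈ Icc (0:ℝ) h := ⟨le_refl _, hh.le⟩
  have hcd : ContDiffOn ℝ 2 g (Icc 0 h) := (hg.of_le (by norm_num)).contDiffOn
  have hdiff : Differentiable ℝ (iteratedDeriv 2 g) := by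
    rw [iteratedDeriv_eq_equiv_comp]
    exact (ContinuousMultilinearMap.piFieldEquiv ℝ (Fin 2) ℝ).symm.toContinuousLinearEquiv
      |>.differentiable.comp ((hg.iteratedFDeriv_right (m := 1) (by norm_num)).differentiable one_ne_zero)
  have hdo : DifferentiableOn ℝ (iteratedDerivWithin 2 g (Icc 0 h)) (Ioo 0 h) := by
    apply (hdiff.differentiableOn (s := Ioo 0 h)).congr
    intro y hy
    exact itdw_eq hg hs (Ioo_subset_Icc_self hy) (by norm_num)
  obtain ⟨x', hx', hR⟩ := taylor_mean_remainder_lagrange (n := 2) hh.ne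
    (by rw [uIcc_of_le hh.le]; exact hcd) (by rw [uIcc_of_le hh.le, uIoo_of_le hh.le]; exact hdo)
  rw [uIcc_of_le hh.le] at hR
  rw [uIoo_of_le hh.le] at hx'
  have hT : taylorWithinEval g 2 (Icc 0 h) 0 h
      = g 0 + h * iteratedDeriv 1 g 0 + h ^ 2 / 2 * iteratedDeriv 2 g 0 := by
    rw [taylor_within_apply]
    rw [Finset.sum_range_succ, Finset.sum_range_succ, Finset.sum_range_one]
    rw [itdw_eq hg hs hmem0 (by norm_num), itdw_eq hg hs hmem0 (by norm_num),
      itdw_eq hg hs hmem0 (by norm_num)]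
    simp only [smul_eq_mul, pow_zero, pow_one, sub_zero, Nat.factorial,
      Nat.cast_ofNat, Nat.cast_one, Nat.mul_one, iteratedDeriv_zero]
    push_cast
    ring
  rw [hT] at hR
  rw [hR]
  rw [itdw_eq hg hs (Ioo_subset_Icc_self hx') (by norm_num)]
  have h1 : |iteratedDeriv 3 g x' * (h - 0) ^ (2 + 1) / (2 + 1).factorial|
      = |iteratedDeriv 3 g x'| * h ^ 3 / 6 := by
    rw [abs_div, abs_mul]
    norm_num [abs_of_nonneg (pow_nonneg hh.le 3), Nat.factorial]
  rw [h1]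
  have := hK x'
  have h3 : (0:ℝ) ≤ h ^ 3 := pow_nonneg hh.le 3
  nlinarith [abs_nonneg (iteratedDeriv 3 g x')]

private lemma symm_taylor_bound {g : ℝ → ℝ} (hg : ContDiff ℝ 3 g) {K h : ℝ}
    (hK : ∀ t, |iteratedDeriv 3 g t| ≤ K) (hh : 0 < h) :
    |g h + g (-h) - 2 * g 0 - h ^ 2 * iteratedDeriv 2 g 0| ≤ K * h ^ 3 / 3 := by
  set g2 : ℝ → ℝ := fun t => g (-t) with hg2
  have hcg2 : ContDiff ℝ 3 g2 := hg.comp (contDiff_id.neg)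
  have hK2 : ∀ t, |iteratedDeriv 3 g2 t| ≤ K := by
    intro t
    rw [hg2, iteratedDeriv_comp_neg]
    simpa [abs_mul] using hK (-t)
  have h1 := one_sided hg hK hh
  have h2 := one_sided hcg2 hK2 hh
  have e0 : g2 0 = g 0 := by simp [hg2]
  have e1 : iteratedDeriv 1 g2 0 = - iteratedDeriv 1 g 0 := by
    rw [hg2, iteratedDeriv_comp_neg]; simp
  have e2 : iteratedDeriv 2 g2 0 = iteratedDeriv 2 g 0 := by
    rw [hg2, iteratedDeriv_comp_neg]; simp
  have eh : g2 h = g (-h) := rfl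
  rw [eh, e0, e1, e2] at h2
  rw [abs_le] at h1 h2 ⊢
  constructor <;> [linarith [h1.1, h2.1]; linarith [h1.2, h2.2]]

private lemma dir_iteratedDeriv {f : E → ℝ} (hf : ContDiff ℝ 3 f) (p v : E) {n : ℕ}
    (hn : n ≤ 3) (t : ℝ) :
    iteratedDeriv n (fun s : ℝ => f (p + s • v)) t
      = iteratedFDeriv ℝ n f (p + t • v) (fun _ => v) := by
  set L : ℝ →L[ℝ] E := (ContinuousLinearMap.id ℝ ℝ).smulRight v with hL
  set fp : E → ℝ := fun y => f (p + y) with hfp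
  have hfpc : ContDiff ℝ 3 fp := hf.comp (contDiff_const.add contDiff_id)
  have hcomp : (fun s : ℝ => f (p + s • v)) = fp ∘ L := by
    funext s; simp [hfp, hL]
  have hn' : (n : WithTop ℕ∞) ≤ 3 := by exact_mod_cast hn
  rw [hcomp, iteratedDeriv_eq_iteratedFDeriv,
    ContinuousLinearMap.iteratedFDeriv_comp_right L hfpc t hn']
  have hLt : L t = t • v := by simp [hL]
  have hfpit : ∀ y, iteratedFDeriv ℝ n fp y = iteratedFDeriv ℝ n f (p + y) := fun y =>
    iteratedFDeriv_comp_const_add' f p n y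
  rw [ContinuousMultilinearMap.compContinuousLinearMap_apply, hLt, hfpit]
  congr 1
  funext i
  simp [hL]

private lemma multilinear_rot (T : ContinuousMultilinearMap ℝ (fun _ : Fin 2 => E) ℝ)
    (x y : E) (a b : ℝ) (hab : a ^ 2 + b ^ 2 = 1) :
    T (fun _ => a • x + b • y) + T (fun _ => -b • x + a • y)
      = T (fun _ => x) + T (fun _ => y) := by
  have hupd0 : ∀ (w z u : E), Function.update ![w, z] 0 u = ![u, z] := by
    intro w z u; funext i; fin_cases i <;> simp
  have hupd1 : ∀ (w z u : E), Function.update ![w, z] 1 u = ![w, u] := by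
    intro w z u; funext i; fin_cases i <;> simp
  have hfun : ∀ w : E, (fun _ : Fin 2 => w) = ![w, w] := by
    intro w; funext i; fin_cases i <;> rfl
  set B : E → E → ℝ := fun w z => T ![w, z] with hB
  have hadd0 : ∀ w w' z : E, B (w + w') z = B w z + B w' z := by
    intro w w' z
    have := T.map_update_add ![w, z] 0 w w'
    simpa [hupd0, hB] using this
  have hadd1 : ∀ w z z' : E, B w (z + z') = B w z + B w z' := by
    intro w z z'
    have := T.map_update_add ![w, z] 1 z z'
    simpa [hupd1, hB] using this
  have hsmul0 : ∀ (c : ℝ) (w z : E), B (c • w) z = c * B w z := by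
    intro c w z
    have := T.map_update_smul ![w, z] 0 c w
    simpa [hupd0, hB] using this
  have hsmul1 : ∀ (c : ℝ) (w z : E), B w (c • z) = c * B w z := by
    intro c w z
    have := T.map_update_smul ![w, z] 1 c z
    simpa [hupd1, hB] using this
  have key : ∀ c d : ℝ, T (fun _ => c • x + d • y)
      = c * (c * B x x) + c * (d * B x y) + (d * (c * B y x) + d * (d * B y y)) := by
    intro c d
    rw [hfun]
    show B (c • x + d • y) (c • x + d • y) = _
    simp only [hadd0, hadd1, hsmul0, hsmul1]
    try ring
  have hx : T (fun _ => x) = B x x := by rw [hfun]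
  have hy : T (fun _ => y) = B y y := by rw [hfun]
  have h1 := key a b
  have h2 : T (fun _ => -b • x + a • y)
      = (-b) * ((-b) * B x x) + (-b) * (a * B x y) + (a * ((-b) * B y x) + a * (a * B y y)) :=
    key (-b) a
  rw [h1, h2, hx, hy]
  linear_combination (B x x + B y y) * hab
end helpers

open EuclideanSpace in
/-- For a three times continuously differentiable image signal `f : ℝ² → ℝ` with
uniformly bounded third derivative, the five-point cross sum over a stencil rotated by an
angle `γ` agrees with the axis-aligned cross sum up to `(4/3) C₃ h³`. -/
theorem five_point_cross_rotation_invariance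
    (f : EuclideanSpace ℝ (Fin 2) → ℝ) (C₃ : ℝ)
    (hf : ContDiff ℝ 3 f)
    (hbound : ∀ x, ‖iteratedFDeriv ℝ 3 f x‖ ≤ C₃)
    (γ : ℝ) (p : EuclideanSpace ℝ (Fin 2)) (h : ℝ) (hh : 0 < h) :
    |(f (p + h • (Real.cos γ • single (0 : Fin 2) (1 : ℝ) + Real.sin γ • single (1 : Fin 2) (1 : ℝ)))
        + f (p - h • (Real.cos γ • single (0 : Fin 2) (1 : ℝ) + Real.sin γ • single (1 : Fin 2) (1 : ℝ)))
        + f (p + h • (-Real.sin γ • single (0 : Fin 2) (1 : ℝ) + Real.cos γ • single (1 : Fin 2) (1 : ℝ)))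
        + f (p - h • (-Real.sin γ • single (0 : Fin 2) (1 : ℝ) + Real.cos γ • single (1 : Fin 2) (1 : ℝ))))
      - (f (p + h • single (0 : Fin 2) (1 : ℝ)) + f (p - h • single (0 : Fin 2) (1 : ℝ))
        + f (p + h • single (1 : Fin 2) (1 : ℝ)) + f (p - h • single (1 : Fin 2) (1 : ℝ)))|
      ≤ (4 / 3) * C₃ * h ^ 3 := by
  set e1 : EuclideanSpace ℝ (Fin 2) := single (0 : Fin 2) (1 : ℝ) with he1
  set e2 : EuclideanSpace ℝ (Fin 2) := single (1 : Fin 2) (1 : ℝ) with he2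
  set vu : EuclideanSpace ℝ (Fin 2) := Real.cos γ • e1 + Real.sin γ • e2 with hvu
  set vp : EuclideanSpace ℝ (Fin 2) := -Real.sin γ • e1 + Real.cos γ • e2 with hvp
  have hne1 : ‖e1‖ = 1 := by rw [he1, EuclideanSpace.norm_single]; norm_num
  have hne2 : ‖e2‖ = 1 := by rw [he2, EuclideanSpace.norm_single]; norm_num
  have happ : ∀ (a b : ℝ), ‖a • e1 + b • e2‖ = Real.sqrt (a ^ 2 + b ^ 2) := by
    intro a b
    rw [EuclideanSpace.norm_eq]
    congr 1
    rw [Fin.sum_univ_two]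
    have h0 : (a • e1 + b • e2) 0 = a := by
      simp [he1, he2, EuclideanSpace.single_apply]
    have h1 : (a • e1 + b • e2) 1 = b := by
      simp [he1, he2, EuclideanSpace.single_apply]
    rw [h0, h1, Real.norm_eq_abs, Real.norm_eq_abs, sq_abs, sq_abs]
  have hnu : ‖vu‖ = 1 := by
    rw [hvu, happ, Real.cos_sq_add_sin_sq, Real.sqrt_one]
  have hnp : ‖vp‖ = 1 := by
    rw [hvp, happ]
    rw [neg_pow, show ((-1:ℝ)^2) = 1 by norm_num, one_mul]
    rw [Real.sin_sq_add_cos_sq, Real.sqrt_one]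
  -- the key pairwise bound
  have key : ∀ v : EuclideanSpace ℝ (Fin 2), ‖v‖ = 1 →
      |f (p + h • v) + f (p - h • v) - 2 * f p
        - h ^ 2 * iteratedFDeriv ℝ 2 f p (fun _ => v)| ≤ C₃ * h ^ 3 / 3 := by
    intro v hv
    set g : ℝ → ℝ := fun t => f (p + t • v) with hg
    have hgc : ContDiff ℝ 3 g :=
      hf.comp (contDiff_const.add (contDiff_id.smul contDiff_const))
    have hK : ∀ t, |iteratedDeriv 3 g t| ≤ C₃ := by
      intro t
      rw [hg, dir_iteratedDeriv hf p v (by norm_num) t]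
      calc |iteratedFDeriv ℝ 3 f (p + t • v) (fun _ => v)|
          ≤ ‖iteratedFDeriv ℝ 3 f (p + t • v)‖ * ∏ _i : Fin 3, ‖v‖ :=
            (iteratedFDeriv ℝ 3 f (p + t • v)).le_opNorm _
        _ ≤ C₃ := by
            rw [Finset.prod_const, hv]
            simpa using hbound (p + t • v)
    have h2 : iteratedDeriv 2 g 0 = iteratedFDeriv ℝ 2 f p (fun _ => v) := by
      rw [hg, dir_iteratedDeriv hf p v (by norm_num) 0]
      norm_num
    have hb := symm_taylor_bound hgc hK hh
    rw [h2] at hb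
    have eg0 : g 0 = f p := by rw [hg]; norm_num
    have egh : g h = f (p + h • v) := rfl
    have egmh : g (-h) = f (p - h • v) := by
      rw [hg]
      norm_num [neg_smul, sub_eq_add_neg]
    rw [eg0, egh, egmh] at hb
    linarith [hb]
  have hQ : iteratedFDeriv ℝ 2 f p (fun _ => vu) + iteratedFDeriv ℝ 2 f p (fun _ => vp)
      = iteratedFDeriv ℝ 2 f p (fun _ => e1) + iteratedFDeriv ℝ 2 f p (fun _ => e2) := by
    rw [hvu, hvp]
    exact multilinear_rot (iteratedFDeriv ℝ 2 f p) e1 e2 (Real.cos γ) (Real.sin γ)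
      (Real.cos_sq_add_sin_sq γ)
  have h1 := abs_le.mp (key vu hnu)
  have h2 := abs_le.mp (key vp hnp)
  have h3 := abs_le.mp (key e1 hne1)
  have h4 := abs_le.mp (key e2 hne2)
  have hQ2 : h ^ 2 * iteratedFDeriv ℝ 2 f p (fun _ => vu)
      + h ^ 2 * iteratedFDeriv ℝ 2 f p (fun _ => vp)
      = h ^ 2 * iteratedFDeriv ℝ 2 f p (fun _ => e1)
      + h ^ 2 * iteratedFDeriv ℝ 2 f p (fun _ => e2) := by
    linear_combination h ^ 2 * hQ
  rw [abs_le]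
  constructor
  · linarith [h1.1, h2.1, h3.2, h4.2]
  · linarith [h1.2, h2.2, h3.1, h4.1]
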